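/- arXiv:1101.2355 — 2 statements merged into one kernel-verified Lean document; each statement's English description precedes it below -/
import Mathlib

section
/- Let θ ∈ ℝ with θ ∉ ℕ* = {1,2,...}, and let F be holomorphic near 0 ∈ ℂ. Then there exists a holomorphic function h near 0 with h(0) ≠ 0 such that, setting u(z) = z h(z), one has e^{-F(z)} z^{-θ} dz = u^{-θ} du as 1-forms near 0; equivalently, e^{-F(z)} z^{-θ} = u(z)^{-θ} u'(z) for a suitable branch of the power on the image. -/
/- STATEMENT 10 (Case 1 of Theorem confharmo): for θ ∉ ℕ* and F holomorphic near 0,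
there is h holomorphic near 0 with h(0) ≠ 0 such that, with u(z) = z·h(z) and the
branch (z h)^{-θ} = z^{-θ}·e^{-θ·log h} (L a holomorphic branch of log h), one has
e^{-F(z)} z^{-θ} dz = u^{-θ} du, i.e. after dividing by z^{-θ}:
e^{-F(z)} = e^{-θ·L(z)}·(h(z) + z·h'(z))  (note u'(z) = h(z) + z·h'(z)). -/

open Complex Filter FormalMultilinearSeries
open scoped ENNReal NNReal Topology

set_option maxHeartbeats 1000000

theorem conical_coordinate_nonintegral (θ : ℝ) (hθ : ∀ n : ℕ, 1 ≤ n → θ ≠ (n : ℝ))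
    (F : ℂ → ℂ) (hF : AnalyticAt ℂ F 0) :
    ∃ h L : ℂ → ℂ, AnalyticAt ℂ h 0 ∧ AnalyticAt ℂ L 0 ∧ h 0 ≠ 0 ∧
      (∀ᶠ z in nhds (0 : ℂ), Complex.exp (L z) = h z) ∧
      (∀ᶠ z in nhds (0 : ℂ),
        Complex.exp (-F z) = Complex.exp (-(θ : ℂ) * L z) * (h z + z * deriv h z)) := by
  -- denominators are nonzero
  have hτn : ∀ n : ℕ, (1 - θ + n : ℝ) ≠ 0 := by
    intro n h
    exact hθ (n + 1) (by omega) (by push_cast; linarith)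
  have hτ0R : (1 - θ : ℝ) ≠ 0 := by simpa using hτn 0
  set τ : ℂ := 1 - (θ : ℂ) with hτdef
  have hτ0 : τ ≠ 0 := by
    have : ((1 - θ : ℝ) : ℂ) ≠ 0 := Complex.ofReal_ne_zero.mpr hτ0R
    simpa [hτdef] using this
  -- the analytic function g = exp(-F)
  set g : ℂ → ℂ := fun z => Complex.exp (-F z) with hgdef
  have hg : AnalyticAt ℂ g 0 := hF.neg.cexp
  obtain ⟨p, hpAt⟩ := hg
  obtain ⟨r, hp⟩ := hpAt
  -- scaled coefficients
  set a : ℕ → ℝ := fun n => (1 - θ) / (1 - θ + n) with hadef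
  set c : ℕ → ℂ := fun n => (a n : ℂ) * p.coeff n with hcdef
  set q : FormalMultilinearSeries ℂ ℂ ℂ := ofScalars ℂ c with hqdef
  -- key coefficient identity : (τ + n) * c n = τ * p.coeff n
  have hcast : ∀ n : ℕ, (τ + n) = ((1 - θ + n : ℝ) : ℂ) := by
    intro n; rw [hτdef]; push_cast; ring
  have hcastne : ∀ n : ℕ, (τ + (n : ℂ)) ≠ 0 := by
    intro n; rw [hcast n]; exact Complex.ofReal_ne_zero.mpr (hτn n)
  have hcoeff : ∀ n : ℕ, (τ + n) * c n = τ * p.coeff n := by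
    intro n
    have hne := hcastne n
    have : (τ + n) * (a n : ℂ) = τ := by
      rw [hadef]
      have : ((((1 - θ) / (1 - θ + n) : ℝ)) : ℂ) = τ / (τ + n) := by
        rw [hcast n, hτdef]; push_cast; ring
      rw [this]
      field_simp
    rw [hcdef, ← mul_assoc, this]
  -- bound on the scaling factors
  obtain ⟨K, hK⟩ : ∃ K : ℝ, ∀ n, |a n| ≤ K := by
    have hten : Filter.Tendsto (fun n : ℕ => |a n|) atTop (nhds 0) := by
      have h1 : Filter.Tendsto (fun n : ℕ => (1 - θ + n : ℝ)) atTop atTop :=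
        tendsto_atTop_add_const_left _ _ tendsto_natCast_atTop_atTop
      have h2 : Filter.Tendsto (fun n : ℕ => a n) atTop (nhds 0) := by
        simpa [hadef, div_eq_mul_inv] using (h1.inv_tendsto_atTop).const_mul (1 - θ)
      simpa using h2.abs
    obtain ⟨K, hK⟩ := hten.bddAbove_range
    exact ⟨K, fun n => hK ⟨n, rfl⟩⟩
  have hK0 : 0 ≤ K := le_trans (abs_nonneg _) (hK 0)
  -- radius of q is at least r
  have hrq : r ≤ q.radius := by
    refine ENNReal.le_of_forall_nnreal_lt (fun r' hr' => ?_)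
    have hr'p : (r' : ℝ≥0∞) < p.radius := lt_of_lt_of_le hr' hp.r_le
    obtain ⟨C, hC, hbound⟩ := p.norm_mul_pow_le_of_lt_radius hr'p
    refine q.le_radius_of_bound (K * C) (fun n => ?_)
    have h1 : ‖q n‖ = ‖c n‖ := ofScalars_norm ℂ c n
    have h2 : ‖c n‖ = |a n| * ‖p.coeff n‖ := by
      rw [hcdef]; rw [norm_mul]; simp
    have h3 : ‖p.coeff n‖ = ‖p n‖ := by simp
    calc ‖q n‖ * (r' : ℝ) ^ n = |a n| * (‖p n‖ * (r' : ℝ) ^ n) := by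
          rw [h1, h2, h3]; ring
      _ ≤ K * C := by
          have := hbound n
          exact mul_le_mul (hK n) this (by positivity) hK0
  -- v = sum of q, power series on ball r
  set v : ℂ → ℂ := q.sum with hvdef
  have hq : HasFPowerSeriesOnBall v q 0 r := by
    have := q.hasFPowerSeriesOnBall (lt_of_lt_of_le hp.r_pos hrq)
    exact this.mono hp.r_pos hrq
  -- the ODE : τ * v + z * v' = τ * g on the ball
  have key : ∀ y ∈ EMetric.ball (0 : ℂ) r, τ * v y + y * deriv v y = τ * g y := by
    intro y hy
    have h1 : HasSum (fun n => c n * y ^ n) (v y) := by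
      have h := hq.hasSum hy
      simp only [zero_add] at h
      have he : (fun n : ℕ => q n fun _ => y) = fun n : ℕ => c n * y ^ n := by
        funext n
        rw [hqdef, ofScalars_apply_eq, smul_eq_mul]
      rwa [he] at h
    have h2 : HasSum (fun n => p.coeff n * y ^ n) (g y) := by
      have h := hp.hasSum hy
      simp only [zero_add] at h
      have he : (fun n : ℕ => p n fun _ => y) = fun n : ℕ => p.coeff n * y ^ n := by
        funext n
        rw [p.apply_eq_pow_smul_coeff, smul_eq_mul, mul_comm]
      rwa [he] at h
    have h3 : HasSum (fun n => q.derivSeries n (fun _ => y)) (fderiv ℂ v y) := by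
      have h := (hq.fderiv).hasSum hy
      simpa using h
    have h4 : HasSum (fun n => (q.derivSeries n (fun _ => y)) y) ((fderiv ℂ v y) y) := by
      set φ : (ℂ →L[ℂ] ℂ) →L[ℂ] ℂ := ContinuousLinearMap.apply ℂ ℂ y with hφ
      have hh := φ.hasSum h3
      simpa [hφ] using hh
    have h5 : HasSum (fun n : ℕ => ((n + 1 : ℕ) : ℂ) * (c (n + 1) * y ^ (n + 1)))
        ((fderiv ℂ v y) y) := by
      have he : (fun n : ℕ => (q.derivSeries n (fun _ => y)) y)
          = fun n : ℕ => ((n + 1 : ℕ) : ℂ) * (c (n + 1) * y ^ (n + 1)) := by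
        funext n
        rw [q.derivSeries_apply_diag, hqdef, ofScalars_apply_eq, smul_eq_mul, nsmul_eq_mul]
      rwa [he] at h4
    have h6 : HasSum (fun n : ℕ => (n : ℂ) * (c n * y ^ n)) ((fderiv ℂ v y) y) := by
      have h := (hasSum_nat_add_iff (f := fun m : ℕ => (m : ℂ) * (c m * y ^ m)) 1).mp h5
      simpa using h
    have h7 : HasSum (fun n : ℕ => τ * (p.coeff n * y ^ n)) (τ * v y + (fderiv ℂ v y) y) := by
      have h := (h1.mul_left τ).add h6
      have he : (fun n : ℕ => τ * (c n * y ^ n) + (n : ℂ) * (c n * y ^ n))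
          = fun n : ℕ => τ * (p.coeff n * y ^ n) := by
        funext n
        linear_combination y ^ n * hcoeff n
      rwa [he] at h
    have h8 : τ * v y + (fderiv ℂ v y) y = τ * g y := h7.unique (h2.mul_left τ)
    have h9 : (fderiv ℂ v y) y = y * deriv v y := by
      have hsm : (fderiv ℂ v y) y = (fderiv ℂ v y) (y • (1 : ℂ)) := by simp
      rw [hsm, (fderiv ℂ v y).map_smul, smul_eq_mul, fderiv_apply_one_eq_deriv]
    rw [h9] at h8
    exact h8
  -- value at 0
  have hball0 : (0 : ℂ) ∈ EMetric.ball (0 : ℂ) r := EMetric.mem_ball_self hp.r_pos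
  have hv0 : v 0 = g 0 := by
    have h := key 0 hball0
    simp only [zero_mul, add_zero] at h
    exact mul_left_cancel₀ hτ0 h
  have hg0 : g 0 ≠ 0 := Complex.exp_ne_zero _
  have hv0ne : v 0 ≠ 0 := hv0 ▸ hg0
  have hvan : AnalyticAt ℂ v 0 := hq.analyticAt
  -- logarithm branch
  set L₀ : ℂ → ℂ := fun z => Complex.log (v 0) + Complex.log (v z / v 0) with hL₀def
  have hdiv : AnalyticAt ℂ (fun z => v z / v 0) 0 := hvan.div analyticAt_const hv0ne
  have hL₀an : AnalyticAt ℂ L₀ 0 := by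
    refine analyticAt_const.add (hdiv.clog ?_)
    simp [div_self hv0ne, Complex.one_mem_slitPlane]
  have hexpL₀ : ∀ᶠ z in nhds (0 : ℂ), Complex.exp (L₀ z) = v z := by
    have hvne : ∀ᶠ z in nhds (0 : ℂ), v z ≠ 0 := hvan.continuousAt.eventually_ne hv0ne
    filter_upwards [hvne] with z hz
    rw [hL₀def]
    simp only
    rw [Complex.exp_add, Complex.exp_log hv0ne, Complex.exp_log (div_ne_zero hz hv0ne)]
    field_simp
  -- define L and h
  set L : ℂ → ℂ := fun z => τ⁻¹ * L₀ z with hLdef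
  set h : ℂ → ℂ := fun z => Complex.exp (L z) with hhdef
  have hLan : AnalyticAt ℂ L 0 := analyticAt_const.mul hL₀an
  have hhan : AnalyticAt ℂ h 0 := hLan.cexp
  refine ⟨h, L, hhan, hLan, Complex.exp_ne_zero _, Filter.Eventually.of_forall (fun z => rfl), ?_⟩
  -- final identity
  have hball : ∀ᶠ z in nhds (0 : ℂ), z ∈ EMetric.ball (0 : ℂ) r :=
    EMetric.ball_mem_nhds 0 hp.r_pos
  have hEE : ∀ᶠ z in nhds (0 : ℂ), (fun w => Complex.exp (L₀ w)) =ᶠ[nhds z] v :=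
    hexpL₀.eventually_nhds
  have hL₀d : ∀ᶠ z in nhds (0 : ℂ), DifferentiableAt ℂ L₀ z := by
    filter_upwards [hL₀an.eventually_analyticAt] with z hz using hz.differentiableAt
  have hvne : ∀ᶠ z in nhds (0 : ℂ), v z ≠ 0 := hvan.continuousAt.eventually_ne hv0ne
  filter_upwards [hball, hEE, hL₀d, hvne, hexpL₀] with z hz1 hz2 hz3 hz4 hz5
  -- derivative of L₀
  have hdL₀ : deriv L₀ z * v z = deriv v z := by
    have hde : deriv (fun w => Complex.exp (L₀ w)) z = deriv v z := hz2.deriv_eq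
    rw [deriv_cexp hz3, hz5] at hde
    linear_combination hde
  have hLd : DifferentiableAt ℂ L z := hz3.const_mul τ⁻¹
  have hdL : deriv L z = τ⁻¹ * deriv L₀ z := by
    rw [hLdef]
    rw [deriv_const_mul _ hz3]
  have hdh : deriv h z = Complex.exp (L z) * deriv L z := by
    rw [hhdef]
    rw [deriv_cexp hLd]
  -- the exponential factor
  have hfac : Complex.exp (-(θ : ℂ) * L z) * Complex.exp (L z) = v z := by
    rw [← Complex.exp_add, ← hz5]
    congr 1
    rw [hLdef]
    simp only
    field_simp [hτdef]
    ring
  -- conclude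
  have hkey := key z hz1
  have hgoal : g z = Complex.exp (-(θ : ℂ) * L z) * (h z + z * deriv h z) := by
    rw [hhdef]
    simp only
    rw [hdh, hdL]
    have : Complex.exp (-(θ : ℂ) * L z) * (Complex.exp (L z)
        + z * (Complex.exp (L z) * (τ⁻¹ * deriv L₀ z)))
        = (Complex.exp (-(θ : ℂ) * L z) * Complex.exp (L z)) * (1 + z * τ⁻¹ * deriv L₀ z) := by
      ring
    rw [this, hfac]
    have hexp : v z * (1 + z * τ⁻¹ * deriv L₀ z) = v z + τ⁻¹ * (z * deriv v z) := by
      have : v z * (z * τ⁻¹ * deriv L₀ z) = τ⁻¹ * (z * (deriv L₀ z * v z)) := by ring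
      rw [mul_add, mul_one, this, hdL₀]
    rw [hexp]
    have hzz : z * deriv v z = τ * g z - τ * v z := by linear_combination hkey
    rw [hzz]
    have hinv : τ⁻¹ * (τ * g z - τ * v z) = g z - v z := by
      field_simp
    rw [hinv]
    ring
  exact hgoal
end

section
/- Let θ ∈ ℤ, θ ≥ 2, and F holomorphic near 0 ∈ ℂ. If the equation e^{-F(z)} z^{-θ} dz = (1 + c u^{θ-1}) u^{-θ} du admits a solution u(z) = z h(z)^{1/(1-θ)} with h holomorphic, h(0) ≠ 0, then necessarily c equals the residue of z^{-θ} e^{-F(z)} at z = 0, i.e., c = a_{θ-1} where e^{-F(z)} = Σ a_n z^n. -/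
/- STATEMENT 13 (Case 3 of Theorem confharmo, residue): for integer θ ≥ 2 and F
holomorphic near 0 with e^{-F(z)} = Σ aₙ zⁿ, if the equation
e^{-F(z)} z^{-θ} dz = (1 + c u^{θ-1}) u^{-θ} du admits a solution u(z) = z·k(z)
(k = h^{1/(1-θ)} holomorphic, k(0) ≠ 0), then necessarily
c = Res₀(z^{-θ} e^{-F(z)}) = a_{θ-1}. -/

open Complex Metric Set

/-- The circle integral of a function that has a primitive on the circle vanishes. -/
theorem circleIntegral_eq_zero_of_primitive {R : ℝ} (hR : 0 ≤ R) {ψ g : ℂ → ℂ}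
    (h : ∀ z ∈ sphere (0:ℂ) R, HasDerivAt ψ (g z) z)
    (hc : ContinuousOn g (sphere (0:ℂ) R)) :
    (∮ z in C(0, R), g z) = 0 := by
  have hcont : Continuous fun θ : ℝ => deriv (circleMap 0 R) θ • g (circleMap 0 R θ) := by
    have h1 : Continuous fun θ : ℝ => g (circleMap 0 R θ) :=
      hc.comp_continuous (continuous_circleMap 0 R) fun θ => circleMap_mem_sphere 0 hR θ
    have h2 : Continuous (deriv (circleMap 0 R)) := by
      have : deriv (circleMap 0 R) = fun θ => circleMap 0 R θ * I := funext (deriv_circleMap 0 R)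
      rw [this]
      exact (continuous_circleMap 0 R).mul continuous_const
    exact h2.smul h1
  have key : ∀ θ ∈ Set.uIcc (0:ℝ) (2*Real.pi),
      HasDerivAt (fun t => ψ (circleMap 0 R t))
        (deriv (circleMap 0 R) θ • g (circleMap 0 R θ)) θ := by
    intro θ _
    have hmem := circleMap_mem_sphere (0:ℂ) hR θ
    have := (h _ hmem).comp θ (hasDerivAt_circleMap 0 R θ)
    refine this.congr_deriv ?_
    simp [smul_eq_mul, mul_comm]
  rw [circleIntegral, intervalIntegral.integral_eq_sub_of_hasDerivAt key
    (hcont.intervalIntegrable _ _)]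
  have hper : circleMap 0 R (2 * Real.pi) = circleMap 0 R 0 := by
    simpa using (periodic_circleMap 0 R) 0
  rw [hper, sub_self]

theorem circleIntegral_add' {f g : ℂ → ℂ} {c : ℂ} {R : ℝ} (hf : CircleIntegrable f c R)
    (hg : CircleIntegrable g c R) :
    (∮ z in C(c, R), (f z + g z)) = (∮ z in C(c, R), f z) + ∮ z in C(c, R), g z := by
  simp only [circleIntegral, smul_add, intervalIntegral.integral_add hf.out hg.out]

theorem residue_forces_translation (θ : ℤ) (hθ : 2 ≤ θ) (c : ℂ)
    (F : ℂ → ℂ) (hF : AnalyticAt ℂ F 0)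
    (a : ℕ → ℂ) (ρ : ℝ) (hρ : 0 < ρ)
    (ha : ∀ z : ℂ, ‖z‖ < ρ → Complex.exp (-F z) = ∑' n : ℕ, a n * z ^ n)
    (u k : ℂ → ℂ) (hk : AnalyticAt ℂ k 0) (hk0 : k 0 ≠ 0)
    (hu : ∀ z : ℂ, u z = z * k z)
    (heq : ∀ᶠ z in nhdsWithin (0 : ℂ) {0}ᶜ,
      Complex.exp (-F z) * z ^ (-θ)
        = (1 + c * u z ^ (θ - 1)) * u z ^ (-θ) * deriv u z) :
    c = a (θ - 1).toNat := by
  set f : ℂ → ℂ := fun z => Complex.exp (-F z) with hf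
  set n : ℕ := (θ - 1).toNat with hndef
  have hn : (n : ℤ) = θ - 1 := Int.toNat_of_nonneg (by omega)
  -- gather all local hypotheses into one neighborhood
  have hev : ∀ᶠ z in nhds (0:ℂ), AnalyticAt ℂ F z ∧ AnalyticAt ℂ k z ∧ k z ≠ 0 ∧
      (z ≠ 0 → f z * z ^ (-θ) = (1 + c * u z ^ (θ - 1)) * u z ^ (-θ) * deriv u z) := by
    have h1 := hF.eventually_analyticAt
    have h2 := hk.eventually_analyticAt
    have h3 : ∀ᶠ z in nhds (0:ℂ), k z ≠ 0 := hk.continuousAt.eventually_ne hk0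
    have h4 := eventually_nhdsWithin_iff.mp heq
    filter_upwards [h1, h2, h3, h4] with z hz1 hz2 hz3 hz4
    exact ⟨hz1, hz2, hz3, fun hz => hz4 hz⟩
  rw [Metric.eventually_nhds_iff] at hev
  obtain ⟨ε, hε, hball⟩ := hev
  set r : ℝ := min (ε/2) (ρ/2) with hrdef
  have hr0 : 0 < r := lt_min (by linarith) (by linarith)
  have hrρ : r < ρ := lt_of_le_of_lt (min_le_right _ _) (by linarith)
  have hprop : ∀ z : ℂ, ‖z‖ ≤ r → AnalyticAt ℂ F z ∧ AnalyticAt ℂ k z ∧ k z ≠ 0 ∧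
      (z ≠ 0 → f z * z ^ (-θ) = (1 + c * u z ^ (θ - 1)) * u z ^ (-θ) * deriv u z) := by
    intro z hz
    refine hball ?_
    rw [dist_zero_right]
    have : r < ε := lt_of_le_of_lt (min_le_left _ _) (by linarith)
    linarith
  -- the power series with coefficients `a`
  have hsum : ∀ z : ℂ, ‖z‖ < ρ → Summable (fun m : ℕ => a m * z ^ m) := by
    intro z hz
    by_contra h
    have h0 := tsum_eq_zero_of_not_summable h
    rw [← ha z hz] at h0
    exact Complex.exp_ne_zero _ h0
  set p : FormalMultilinearSeries ℂ ℂ ℂ := FormalMultilinearSeries.ofScalars ℂ a with hpdef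
  have hradius : 0 < p.radius := by
    have hz₀ : ‖((ρ/2 : ℝ) : ℂ)‖ < ρ := by
      rw [Complex.norm_real, Real.norm_eq_abs, abs_of_pos (by linarith)]
      linarith
    have hs := hsum _ hz₀
    have htend := hs.tendsto_atTop_zero.norm
    obtain ⟨C, hC⟩ := htend.bddAbove_range
    set nn : NNReal := ⟨ρ/2, by linarith⟩ with hnn
    have hle : (nn : ENNReal) ≤ p.radius := by
      apply p.le_radius_of_bound C
      intro m
      have hCm := hC ⟨m, rfl⟩
      rw [hpdef, FormalMultilinearSeries.ofScalars_norm]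
      calc ‖a m‖ * (nn : ℝ) ^ m
          = ‖a m * ((ρ/2 : ℝ) : ℂ) ^ m‖ := by
            rw [norm_mul, norm_pow, Complex.norm_real, Real.norm_eq_abs,
              abs_of_pos (by linarith), hnn]
            rfl
        _ ≤ C := hCm
    refine lt_of_lt_of_le ?_ hle
    rw [ENNReal.coe_pos]
    refine NNReal.coe_pos.mp ?_
    simp only [hnn, NNReal.coe_mk]
    exact half_pos hρ
  have hps : HasFPowerSeriesAt f p 0 := by
    have h1 := (p.hasFPowerSeriesOnBall hradius).hasFPowerSeriesAt
    refine h1.congr ?_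
    filter_upwards [Metric.ball_mem_nhds (0:ℂ) hρ] with z hz
    rw [mem_ball, dist_zero_right] at hz
    rw [FormalMultilinearSeries.sum]
    simp only [hpdef, FormalMultilinearSeries.ofScalars_apply_eq, smul_eq_mul]
    exact (ha z hz).symm
  -- the Cauchy power series
  have hdiff : DifferentiableOn ℂ f (closedBall (0:ℂ) r.toNNReal) := by
    intro z hz
    rw [mem_closedBall, dist_zero_right, Real.coe_toNNReal _ hr0.le] at hz
    exact (((hprop z hz).1.differentiableAt.neg).cexp).differentiableWithinAt
  have hq := (hdiff.hasFPowerSeriesOnBall (by simpa using hr0)).hasFPowerSeriesAt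
  have hpq : p = cauchyPowerSeries f 0 r.toNNReal := hps.eq_formalMultilinearSeries hq
  -- coefficient formula
  have hcoeff : a n = (2 * (Real.pi:ℂ) * I)⁻¹ •
      ∮ z in C(0, r), ((1:ℂ) / (z - 0)) ^ n • (z - 0)⁻¹ • f z := by
    have h1 : p n (fun _ => (1:ℂ)) = cauchyPowerSeries f 0 r.toNNReal n (fun _ => (1:ℂ)) := by
      rw [hpq]
    rw [hpdef] at h1
    rw [FormalMultilinearSeries.ofScalars_apply_eq, cauchyPowerSeries_apply] at h1
    rw [Real.coe_toNNReal _ hr0.le] at h1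
    simpa using h1
  -- analyticity on the closed ball
  have hkan : AnalyticOnNhd ℂ k (closedBall (0:ℂ) r) := by
    intro z hz
    rw [mem_closedBall, dist_zero_right] at hz
    exact (hprop z hz).2.1
  have hdkan : AnalyticOnNhd ℂ (deriv k) (closedBall (0:ℂ) r) := hkan.deriv
  have hmemball : ∀ z ∈ sphere (0:ℂ) r, ‖z‖ ≤ r := by
    intro z hz
    rw [mem_sphere_iff_norm, sub_zero] at hz
    exact hz.le
  have hzne : ∀ z ∈ sphere (0:ℂ) r, z ≠ 0 := by
    intro z hz h0
    rw [mem_sphere_iff_norm, sub_zero, h0] at hz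
    simp only [norm_zero] at hz
    exact hr0.ne hz
  set g₁ : ℂ → ℂ := fun z => (z * k z) ^ (-θ) * (k z + z * deriv k z) with hg₁
  set g₂ : ℂ → ℂ := fun z => c * z⁻¹ + c * (deriv k z / k z) with hg₂
  -- pointwise identity on the sphere
  have hderivu : ∀ z : ℂ, ‖z‖ ≤ r → deriv u z = k z + z * deriv k z := by
    intro z hz
    have hu' : u = fun w => w * k w := funext hu
    have hdk : HasDerivAt k (deriv k z) z := (hprop z hz).2.1.differentiableAt.hasDerivAt
    have hd : HasDerivAt (fun w => w * k w) (1 * k z + z * deriv k z) z :=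
      (hasDerivAt_id z).mul hdk
    rw [hu', hd.deriv, one_mul]
  have hsphere : ∀ z ∈ sphere (0:ℂ) r,
      ((1:ℂ) / (z - 0)) ^ n • (z - 0)⁻¹ • f z = g₁ z + g₂ z := by
    intro z hz
    have hzr := hmemball z hz
    have hz0 := hzne z hz
    have hkz : k z ≠ 0 := (hprop z hzr).2.2.1
    have hwne : z * k z ≠ 0 := mul_ne_zero hz0 hkz
    have hE := (hprop z hzr).2.2.2 hz0
    have hzθ : z ^ (-θ) = (z ^ n)⁻¹ * z⁻¹ := by
      rw [show -θ = -(n:ℤ) + (-1) by omega, zpow_add₀ hz0, zpow_neg, zpow_natCast,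
        zpow_neg, zpow_one]
    have hLHS : ((1:ℂ) / (z - 0)) ^ n • (z - 0)⁻¹ • f z = f z * z ^ (-θ) := by
      rw [sub_zero, smul_eq_mul, smul_eq_mul, hzθ, one_div, inv_pow]
      ring
    rw [hLHS, hE, hu z, hderivu z hzr]
    have h1 : (z * k z) ^ (θ - 1) * (z * k z) ^ (-θ) = (z * k z)⁻¹ := by
      rw [← zpow_add₀ hwne, show θ - 1 + -θ = -1 by ring, zpow_neg_one]
    have h2 : c * (z * k z)⁻¹ * (k z + z * deriv k z)
        = c * z⁻¹ + c * (deriv k z / k z) := by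
      field_simp
    calc (1 + c * (z * k z) ^ (θ - 1)) * (z * k z) ^ (-θ) * (k z + z * deriv k z)
        = (z * k z) ^ (-θ) * (k z + z * deriv k z)
          + c * ((z * k z) ^ (θ - 1) * (z * k z) ^ (-θ)) * (k z + z * deriv k z) := by ring
      _ = (z * k z) ^ (-θ) * (k z + z * deriv k z)
          + c * (z * k z)⁻¹ * (k z + z * deriv k z) := by rw [h1]
      _ = g₁ z + g₂ z := by rw [h2]
  -- continuity of the pieces
  have hcont1 : ContinuousOn g₁ (sphere (0:ℂ) r) := by
    intro z hz
    have hzr := hmemball z hz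
    have hkz : k z ≠ 0 := (hprop z hzr).2.2.1
    have hwne : z * k z ≠ 0 := mul_ne_zero (hzne z hz) hkz
    have hck : ContinuousAt k z := (hprop z hzr).2.1.continuousAt
    have hcdk : ContinuousAt (deriv k) z :=
      (hdkan z (by rw [mem_closedBall, dist_zero_right]; exact hzr)).continuousAt
    exact (((continuousAt_id.mul hck).zpow₀ (-θ) (Or.inl hwne)).mul
      (hck.add (continuousAt_id.mul hcdk))).continuousWithinAt
  have hcont2 : ContinuousOn g₂ (sphere (0:ℂ) r) := by
    intro z hz
    have hzr := hmemball z hz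
    have hkz : k z ≠ 0 := (hprop z hzr).2.2.1
    have hcdk : ContinuousAt (deriv k) z :=
      (hdkan z (by rw [mem_closedBall, dist_zero_right]; exact hzr)).continuousAt
    exact ((continuousAt_const.mul (continuousAt_id.inv₀ (hzne z hz))).add
      (continuousAt_const.mul (hcdk.div ((hprop z hzr).2.1.continuousAt) hkz))).continuousWithinAt
  -- the integral of g₁ vanishes: it has a primitive
  have hint1 : (∮ z in C(0, r), g₁ z) = 0 := by
    have hθ1 : ((1:ℂ) - (θ:ℂ)) ≠ 0 := by
      have : ((1 - θ : ℤ) : ℂ) ≠ 0 := Int.cast_ne_zero.mpr (by omega)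
      push_cast at this
      exact this
    refine circleIntegral_eq_zero_of_primitive hr0.le
      (ψ := fun z => ((1:ℂ) - (θ:ℂ))⁻¹ * (z * k z) ^ (1 - θ)) ?_ hcont1
    intro z hz
    have hzr := hmemball z hz
    have hkz : k z ≠ 0 := (hprop z hzr).2.2.1
    have hwne : z * k z ≠ 0 := mul_ne_zero (hzne z hz) hkz
    have hdk : HasDerivAt k (deriv k z) z := (hprop z hzr).2.1.differentiableAt.hasDerivAt
    have hmul : HasDerivAt (fun w => w * k w) (1 * k z + z * deriv k z) z :=
      (hasDerivAt_id z).mul hdk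
    have hzp : HasDerivAt (fun t : ℂ => t ^ (1 - θ))
        (((1 - θ : ℤ) : ℂ) * (z * k z) ^ (1 - θ - 1)) (z * k z) :=
      hasDerivAt_zpow _ _ (Or.inl hwne)
    have hcomp := (hzp.comp z hmul).const_mul (((1:ℂ) - (θ:ℂ))⁻¹)
    refine hcomp.congr_deriv ?_
    symm
    rw [hg₁]
    have hexp : (1 : ℤ) - θ - 1 = -θ := by ring
    rw [hexp]
    have hcast : ((1 - θ : ℤ) : ℂ) = (1:ℂ) - (θ:ℂ) := by push_cast; ring
    rw [hcast, one_mul]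
    field_simp
  -- the integral of g₂ equals 2πi·c
  have hint2 : (∮ z in C(0, r), g₂ z) = c * (2 * (Real.pi:ℂ) * I) := by
    have hi1 : CircleIntegrable (fun z : ℂ => c * z⁻¹) 0 r := by
      refine ContinuousOn.circleIntegrable hr0.le ?_
      intro z hz
      exact (continuousAt_const.mul (continuousAt_id.inv₀ (hzne z hz))).continuousWithinAt
    have hi2 : CircleIntegrable (fun z : ℂ => c * (deriv k z / k z)) 0 r := by
      refine ContinuousOn.circleIntegrable hr0.le ?_
      intro z hz
      have hzr := hmemball z hz
      have hcdk : ContinuousAt (deriv k) z :=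
        (hdkan z (by rw [mem_closedBall, dist_zero_right]; exact hzr)).continuousAt
      exact (continuousAt_const.mul
        (hcdk.div ((hprop z hzr).2.1.continuousAt) (hprop z hzr).2.2.1)).continuousWithinAt
    rw [hg₂]
    rw [circleIntegral_add' hi1 hi2]
    have e1 : (∮ z in C(0, r), c * z⁻¹) = c * (2 * (Real.pi:ℂ) * I) := by
      rw [circleIntegral.integral_const_mul]
      have := circleIntegral.integral_sub_inv_of_mem_ball
        (c := (0:ℂ)) (w := (0:ℂ)) (R := r) (by simpa using hr0)
      simp only [sub_zero] at this
      rw [this]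
    have e2 : (∮ z in C(0, r), c * (deriv k z / k z)) = 0 := by
      rw [circleIntegral.integral_const_mul]
      have hz0 : (∮ z in C(0, r), deriv k z / k z) = 0 := by
        refine Complex.circleIntegral_eq_zero_of_differentiable_on_off_countable hr0.le
          Set.countable_empty ?_ ?_
        · intro z hz
          have hcdk : ContinuousAt (deriv k) z := (hdkan z hz).continuousAt
          rw [mem_closedBall, dist_zero_right] at hz
          exact (hcdk.div ((hprop z hz).2.1.continuousAt) (hprop z hz).2.2.1).continuousWithinAt
        · intro z hz
          have hz' : z ∈ closedBall (0:ℂ) r := ball_subset_closedBall hz.1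
          have hzr : ‖z‖ ≤ r := by rwa [mem_closedBall, dist_zero_right] at hz'
          exact ((hdkan z hz').differentiableAt).div
            ((hprop z hzr).2.1.differentiableAt) (hprop z hzr).2.2.1
      rw [hz0, mul_zero]
    rw [e1, e2, add_zero]
  -- put everything together
  have hItot : (∮ z in C(0, r), ((1:ℂ) / (z - 0)) ^ n • (z - 0)⁻¹ • f z)
      = c * (2 * (Real.pi:ℂ) * I) := by
    rw [circleIntegral.integral_congr hr0.le hsphere,
      circleIntegral_add' (hcont1.circleIntegrable hr0.le) (hcont2.circleIntegrable hr0.le),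
      hint1, hint2, zero_add]
  rw [hItot, smul_eq_mul] at hcoeff
  rw [hcoeff]
  have h2πI : (2 * (Real.pi:ℂ) * I) ≠ 0 := by
    simp [Real.pi_ne_zero, I_ne_zero]
  field_simp
end
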